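/- Let ω be a semi-selforthogonal subcategory of a triangulated category T and let G be an ω-Gorenstein object. Then there exists a triangle G → M₀ →g G₁ → G[1] with M₀ ∈ add ω, G₁ an ω-Gorenstein object, and g a right add ω-approximation of G₁ (i.e., Hom(M', g) is surjective for every M' ∈ add ω). -/

import Mathlib

open CategoryTheory Category Limits Pretriangulated

universe v u

namespace RelSing

variable {C : Type u} [Category.{v} C] [Preadditive C] [HasZeroObject C]
  [HasShift C ℤ] [∀ n : ℤ, (shiftFunctor C n).Additive] [Pretriangulated C]

/-- `ω` is semi-selforthogonal (presilting): `Hom(M, M'[i]) = 0` for `M, M' ∈ ω`, `i > 0`. -/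
def SemiSelfOrth (ω : Set C) : Prop :=
  ∀ M ∈ ω, ∀ M' ∈ ω, ∀ i : ℤ, 0 < i → ∀ f : M ⟶ M'⟦i⟧, f = 0

/-- `add ω`: closure of `ω` under zero objects, finite direct sums (expressed via
biproduct data) and direct summands (retracts). -/
inductive AddCat (ω : Set C) : C → Prop
  | of {X : C} (hX : X ∈ ω) : AddCat ω X
  | zero {X : C} (hX : IsZero X) : AddCat ω X
  | sum {X Y Z : C} (i₁ : X ⟶ Z) (i₂ : Y ⟶ Z) (p₁ : Z ⟶ X) (p₂ : Z ⟶ Y)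
      (h₁ : i₁ ≫ p₁ = 𝟙 X) (h₂ : i₂ ≫ p₂ = 𝟙 Y) (h₁₂ : i₁ ≫ p₂ = 0) (h₂₁ : i₂ ≫ p₁ = 0)
      (hZ : p₁ ≫ i₁ + p₂ ≫ i₂ = 𝟙 Z) (hX : AddCat ω X) (hY : AddCat ω Y) : AddCat ω Z
  | retract {X Y : C} (i : X ⟶ Y) (r : Y ⟶ X) (hir : i ≫ r = 𝟙 X) (hY : AddCat ω Y) :
      AddCat ω X

/-- The left orthogonal `⊥ω`. -/
def leftPerp (ω : Set C) : Set C :=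
  {N | ∀ M ∈ ω, ∀ i : ℤ, 0 < i → ∀ f : N ⟶ M⟦i⟧, f = 0}

/-- The right orthogonal `ω⊥`. -/
def rightPerp (ω : Set C) : Set C :=
  {N | ∀ M ∈ ω, ∀ i : ℤ, 0 < i → ∀ f : M ⟶ N⟦i⟧, f = 0}

/-- The Auslander class `X_ω`: objects `T₀` with triangles `T_i → M_i → T_{i+1} → T_i[1]`
for all `i ≥ 0`, `M_i ∈ add ω`, `T_i ∈ ⊥ω`. -/
def Auslander (ω : Set C) : Set C :=
  {X | ∃ (T : ℕ → C) (M : ℕ → C) (f : ∀ i, T i ⟶ M i) (g : ∀ i, M i ⟶ T (i + 1))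
      (h : ∀ i, T (i + 1) ⟶ (T i)⟦(1 : ℤ)⟧),
    T 0 = X ∧ (∀ i, Triangle.mk (f i) (g i) (h i) ∈ distTriang C) ∧
      (∀ i, AddCat ω (M i)) ∧ (∀ i, T i ∈ leftPerp ω)}

/-- The co-Auslander class `ωX`: objects `T₀` with triangles `T_{i+1} → M_i → T_i → T_{i+1}[1]`
for all `i ≥ 0`, `M_i ∈ add ω`, `T_i ∈ ω⊥`. -/
def coAuslander (ω : Set C) : Set C :=
  {X | ∃ (T : ℕ → C) (M : ℕ → C) (f : ∀ i, T (i + 1) ⟶ M i) (g : ∀ i, M i ⟶ T i)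
      (h : ∀ i, T i ⟶ (T (i + 1))⟦(1 : ℤ)⟧),
    T 0 = X ∧ (∀ i, Triangle.mk (f i) (g i) (h i) ∈ distTriang C) ∧
      (∀ i, AddCat ω (M i)) ∧ (∀ i, T i ∈ rightPerp ω)}

/-- `check S` (`S̬`): objects `X₀` with triangles `X_i → C_i → X_{i+1} → X_i[1]` for
`0 ≤ i ≤ r`, `C_i ∈ S`, `X_{r+1} = 0`. -/
def CheckClass (S : Set C) : Set C :=
  {X | ∃ (r : ℕ) (T : ℕ → C) (M : ℕ → C) (f : ∀ i, T i ⟶ M i) (g : ∀ i, M i ⟶ T (i + 1))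
      (h : ∀ i, T (i + 1) ⟶ (T i)⟦(1 : ℤ)⟧),
    T 0 = X ∧ IsZero (T (r + 1)) ∧ (∀ i ≤ r, Triangle.mk (f i) (g i) (h i) ∈ distTriang C) ∧
      (∀ i ≤ r, M i ∈ S)}

/-- `hat S` (`Ŝ`): objects `X₀` with triangles `X_{i+1} → C_i → X_i → X_{i+1}[1]` for
`0 ≤ i ≤ r`, `C_i ∈ S`, `X_{r+1} = 0`. -/
def HatClass (S : Set C) : Set C :=
  {X | ∃ (r : ℕ) (T : ℕ → C) (M : ℕ → C) (f : ∀ i, T (i + 1) ⟶ M i) (g : ∀ i, M i ⟶ T i)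
      (h : ∀ i, T i ⟶ (T (i + 1))⟦(1 : ℤ)⟧),
    T 0 = X ∧ IsZero (T (r + 1)) ∧ (∀ i ≤ r, Triangle.mk (f i) (g i) (h i) ∈ distTriang C) ∧
      (∀ i ≤ r, M i ∈ S)}

/-- A (strictly full) triangulated subcategory, as a predicate on sets of objects. -/
structure IsTriangulatedSub (S : Set C) : Prop where
  zero : ∀ X : C, IsZero X → X ∈ S
  iso : ∀ {X Y : C}, (X ≅ Y) → X ∈ S → Y ∈ S
  shift : ∀ X ∈ S, ∀ n : ℤ, X⟦n⟧ ∈ S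
  ext₂ : ∀ T ∈ distTriang C, T.obj₁ ∈ S → T.obj₃ ∈ S → T.obj₂ ∈ S

/-- `⟨S⟩`: the smallest triangulated subcategory containing `S`. -/
def genTriang (S : Set C) : Set C :=
  ⋂₀ {U : Set C | S ⊆ U ∧ IsTriangulatedSub U}

/-- `S[+] = {X | X ≅ C[n], C ∈ S, n ≥ 0}`. -/
def plusClass (S : Set C) : Set C :=
  {X | ∃ Y ∈ S, ∃ n : ℕ, Nonempty (X ≅ Y⟦(n : ℤ)⟧)}

/-- `S[-] = {X | X ≅ C[n], C ∈ S, n ≤ 0}`. -/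
def minusClass (S : Set C) : Set C :=
  {X | ∃ Y ∈ S, ∃ n : ℕ, Nonempty (X ≅ Y⟦(-(n : ℤ))⟧)}

/-- `f` factors through an object of `add ω`. -/
def FactorsThruAdd (ω : Set C) {X Y : C} (f : X ⟶ Y) : Prop :=
  ∃ (M : C) (g : X ⟶ M) (h : M ⟶ Y), AddCat ω M ∧ g ≫ h = f

/-- The `ω`-Gorenstein objects: `G_ω = ωX ∩ X_ω`. -/
def Gor (ω : Set C) : Set C := coAuslander ω ∩ Auslander ω


end RelSing

open RelSing

variable {C : Type u} [Category.{v} C] [Preadditive C] [HasZeroObject C]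
  [HasShift C ℤ] [∀ n : ℤ, (shiftFunctor C n).Additive] [Pretriangulated C]

/-- Maps out of an object of `add ω` vanish if maps out of objects of `ω` vanish. -/
lemma addCat_src_zero {ω : Set C} {N Y : C} (hN : AddCat ω N)
    (h0 : ∀ M ∈ ω, ∀ f : M ⟶ Y, f = 0) : ∀ f : N ⟶ Y, f = 0 := by
  induction hN with
  | of hX => exact h0 _ hX
  | zero hX => intro f; exact hX.eq_of_src f 0
  | sum i₁ i₂ p₁ p₂ h₁ h₂ h₁₂ h₂₁ hZ hX hY ihX ihY =>
    intro f
    have : f = (p₁ ≫ i₁ + p₂ ≫ i₂) ≫ f := by rw [hZ, id_comp]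
    rw [this, Preadditive.add_comp, assoc, assoc, ihX (i₁ ≫ f), ihY (i₂ ≫ f),
      comp_zero, comp_zero, add_zero]
  | retract i r hir hY ihY =>
    intro f
    have : f = (i ≫ r) ≫ f := by rw [hir, id_comp]
    rw [this, assoc, ihY (r ≫ f), comp_zero]

/-- Maps into a shift of an object of `add ω` vanish if maps into the corresponding
shifts of objects of `ω` vanish. -/
lemma addCat_tgt_zero {ω : Set C} {X : C} {i : ℤ} {N : C} (hN : AddCat ω N)
    (h0 : ∀ M' ∈ ω, ∀ f : X ⟶ M'⟦i⟧, f = 0) : ∀ f : X ⟶ N⟦i⟧, f = 0 := by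
  induction hN with
  | of hX => exact h0 _ hX
  | zero hX =>
    intro f
    have : IsZero ((shiftFunctor C i).obj _) := Functor.map_isZero _ hX
    exact this.eq_of_tgt f 0
  | @sum A B Z i₁ i₂ p₁ p₂ h₁ h₂ h₁₂ h₂₁ hZ hX hY ihX ihY =>
    intro f
    have : f = f ≫ (p₁ ≫ i₁ + p₂ ≫ i₂)⟦i⟧' := by
      rw [hZ, (shiftFunctor C i).map_id, comp_id]
    rw [this, Functor.map_add, Preadditive.comp_add, Functor.map_comp, Functor.map_comp,
      ← assoc, ← assoc, ihX (f ≫ p₁⟦i⟧'), ihY (f ≫ p₂⟦i⟧'), zero_comp, zero_comp, add_zero]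
  | @retract A B j r hir hY ihY =>
    intro f
    have : f = f ≫ (j ≫ r)⟦i⟧' := by rw [hir, (shiftFunctor C i).map_id, comp_id]
    rw [this, Functor.map_comp, ← assoc, ihY (f ≫ j⟦i⟧'), zero_comp]

/-- One-step extension of the co-Auslander class. -/
lemma coAuslander_step {ω : Set C} {X Y M₀ : C} (hX : X ∈ coAuslander ω)
    (hM : AddCat ω M₀) (hY : Y ∈ rightPerp ω) (a : X ⟶ M₀) (g : M₀ ⟶ Y)
    (h : Y ⟶ X⟦(1 : ℤ)⟧) (hT : Triangle.mk a g h ∈ distTriang C) :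
    Y ∈ coAuslander ω := by
  obtain ⟨S, N, f', g', h', hS0, hdist, hN, hperp⟩ := hX
  subst hS0
  refine ⟨fun n => match n with | 0 => Y | (k + 1) => S k,
    fun n => match n with | 0 => M₀ | (k + 1) => N k,
    fun n => match n with | 0 => a | (k + 1) => f' k,
    fun n => match n with | 0 => g | (k + 1) => g' k,
    fun n => match n with | 0 => h | (k + 1) => h' k,
    rfl, ?_, ?_, ?_⟩
  · rintro (_ | i)
    · exact hT
    · exact hdist i
  · rintro (_ | i)
    · exact hM
    · exact hN i
  · rintro (_ | i)
    · exact hY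
    · exact hperp i

/-- For a semi-selforthogonal `ω` and an `ω`-Gorenstein object `G`, there is a
triangle `G → M₀ →g G₁ → G[1]` with `M₀ ∈ add ω`, `G₁` `ω`-Gorenstein and `g` a
right `add ω`-approximation of `G₁`. -/
theorem stmt9 (ω : Set C) (hω : SemiSelfOrth ω) {G : C} (hG : G ∈ Gor ω) :
    ∃ (M₀ G₁ : C) (a : G ⟶ M₀) (g : M₀ ⟶ G₁) (h : G₁ ⟶ G⟦(1 : ℤ)⟧),
      Triangle.mk a g h ∈ (distTriang C) ∧ AddCat ω M₀ ∧ G₁ ∈ Gor ω ∧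
      (∀ M' : C, AddCat ω M' → ∀ k : M' ⟶ G₁, ∃ l : M' ⟶ M₀, l ≫ g = k) := by
  obtain ⟨hco, hA⟩ := hG
  obtain ⟨T, M, f, g, h, hT0, hdist, hM, hperpL⟩ := hA
  subst hT0
  -- `T 0 ∈ ω⊥`
  have hT0perp : T 0 ∈ rightPerp ω := by
    obtain ⟨S, N, _, _, _, hS0, _, _, hSperp⟩ := hco
    exact hS0 ▸ hSperp 0
  -- `T 1 ∈ ω⊥`
  have hT1perp : T 1 ∈ rightPerp ω := by
    intro M' hM' i hi φ
    have hTsh := Pretriangulated.Triangle.shift_distinguished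
      (Triangle.mk (f 0) (g 0) (h 0)) (hdist 0) i
    set Tsh := (CategoryTheory.shiftFunctor (Triangle C) i).obj
      (Triangle.mk (f 0) (g 0) (h 0)) with hTshdef
    have hmor3 : (φ ≫ Tsh.mor₃) = 0 := by
      set e := (shiftFunctorAdd C i (1 : ℤ)).app (T 0)
      have : φ ≫ Tsh.mor₃ = ((φ ≫ Tsh.mor₃) ≫ e.inv) ≫ e.hom := by
        exact ((assoc _ _ _).trans ((congrArg (fun y => (φ ≫ Tsh.mor₃) ≫ y) e.inv_hom_id).trans
          (comp_id _))).symm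
      rw [this, hT0perp M' hM' (i + 1) (by omega) ((φ ≫ Tsh.mor₃) ≫ e.inv), zero_comp]
      rfl
    obtain ⟨l, hl⟩ := Pretriangulated.Triangle.coyoneda_exact₃ Tsh hTsh φ hmor3
    have hl0 : l = 0 := by
      have h0 : ∀ M'' ∈ ω, ∀ ψ : M' ⟶ M''⟦i⟧, ψ = 0 :=
        fun M'' hM'' ψ => hω M' hM' M'' hM'' i hi ψ
      have := addCat_tgt_zero (hM 0) h0
      exact this l
    rw [hl, hl0, zero_comp]
    rfl
  refine ⟨M 0, T 1, f 0, g 0, h 0, hdist 0, hM 0, ⟨?_, ?_⟩, ?_⟩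
  · -- `T 1 ∈ coAuslander ω`
    exact coAuslander_step hco (hM 0) hT1perp (f 0) (g 0) (h 0) (hdist 0)
  · -- `T 1 ∈ Auslander ω`
    exact ⟨fun n => T (n + 1), fun n => M (n + 1), fun n => f (n + 1),
      fun n => g (n + 1), fun n => h (n + 1), rfl, fun i => hdist (i + 1),
      fun i => hM (i + 1), fun i => hperpL (i + 1)⟩
  · -- approximation property
    intro M' hM' k
    have hk : k ≫ h 0 = 0 :=
      addCat_src_zero hM' (fun Mx hMx fx => hT0perp Mx hMx 1 one_pos fx) (k ≫ h 0)
    obtain ⟨l, hl⟩ := Pretriangulated.Triangle.coyoneda_exact₃ _ (hdist 0) k hk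
    exact ⟨l, hl.symm⟩
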